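/- Define b(r, x) := (r² − 1)/(1 − x) + 3/(1 − x)² − 2/(1 − x)³. For every integer M ≥ 1, every function g : ℕ → ℂ, and every q ∈ ℂ with q^M ≠ 1, one has Σ_{r ∣ M} g(M/r) · b(r, q^r) = Σ_{r ∣ M} Σ_ζ [ (M·G_{−1}(M/r) − M^{−3}·G₃(M/r)) / (1 − ζq) + (3·M^{−3}·G₃(M/r)) / (1 − ζq)² − (2·M^{−3}·G₃(M/r)) / (1 − ζq)³ ], where r runs over the positive divisors of M, the inner sum runs over the primitive r-th roots of unity ζ in ℂ, and G_γ(d) := Σ_{k ∣ d} k^γ · g(k) (sum over positive divisors k of d; in particular G_{−1}(d) = Σ_{k ∣ d} g(k)/k). -/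

import Mathlib

open Finset

/-- The multiple-cover function `b(r, x) = (r² − 1)/(1 − x) + 3/(1 − x)² − 2/(1 − x)³`. -/
noncomputable def mcB (r : ℕ) (x : ℂ) : ℂ :=
  ((r : ℂ) ^ 2 - 1) / (1 - x) + 3 / (1 - x) ^ 2 - 2 / (1 - x) ^ 3

/-- `G_γ(d) = Σ_{k ∣ d} k^γ · g(k)`, sum over positive divisors `k` of `d`. -/
noncomputable def GVsum (g : ℕ → ℂ) (γ : ℤ) (d : ℕ) : ℂ :=
  ∑ k ∈ d.divisors, (k : ℂ) ^ γ * g k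

open Polynomial in
/-- Power sums over all `r`-th roots of unity in `ℂ`. -/
lemma sum_pow_nthRoots (r : ℕ) (hr : 0 < r) (n : ℕ) :
    ∑ ζ ∈ nthRootsFinset r (1 : ℂ), ζ ^ n = if r ∣ n then (r : ℂ) else 0 := by
  have hω : IsPrimitiveRoot (Complex.exp (2 * Real.pi * Complex.I / r)) r :=
    Complex.isPrimitiveRoot_exp r hr.ne'
  set ω := Complex.exp (2 * Real.pi * Complex.I / r) with hωdef
  have hω0 : ω ≠ 0 := Complex.exp_ne_zero _
  by_cases hdvd : r ∣ n
  · rw [if_pos hdvd]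
    rw [Finset.sum_congr rfl (fun ζ hζ => ?_), Finset.sum_const,
      hω.card_nthRootsFinset, nsmul_eq_mul, mul_one]
    obtain ⟨k, rfl⟩ := hdvd
    rw [pow_mul, (mem_nthRootsFinset hr 1).1 hζ, one_pow]
  · rw [if_neg hdvd]
    have key : ∑ ζ ∈ nthRootsFinset r (1 : ℂ), (ω * ζ) ^ n = ∑ ζ ∈ nthRootsFinset r (1 : ℂ), ζ ^ n := by
      refine Finset.sum_nbij' (fun ζ => ω * ζ) (fun ζ => ω⁻¹ * ζ) ?_ ?_ ?_ ?_ ?_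
      · intro ζ hζ
        rw [mem_nthRootsFinset hr] at hζ ⊢
        rw [mul_pow, hζ, hω.pow_eq_one, one_mul]
      · intro ζ hζ
        rw [mem_nthRootsFinset hr] at hζ ⊢
        rw [mul_pow, hζ, inv_pow, hω.pow_eq_one, inv_one, one_mul]
      · intro ζ _; field_simp
      · intro ζ _; field_simp
      · intro ζ _; rw [mul_pow]
    have hωn : ω ^ n ≠ 1 := fun h => hdvd (hω.dvd_of_pow_eq_one n h)
    have : (ω ^ n - 1) * ∑ ζ ∈ nthRootsFinset r (1 : ℂ), ζ ^ n = 0 := by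
      rw [sub_mul, one_mul, sub_eq_zero]
      calc ω ^ n * ∑ ζ ∈ nthRootsFinset r (1 : ℂ), ζ ^ n
          = ∑ ζ ∈ nthRootsFinset r (1 : ℂ), (ω * ζ) ^ n := by
            rw [Finset.mul_sum]; exact Finset.sum_congr rfl fun ζ _ => (mul_pow _ _ _).symm
        _ = _ := key
    rcases mul_eq_zero.1 this with h | h
    · exact absurd (sub_eq_zero.1 h) hωn
    · exact h

open Polynomial in
lemma geom_fact (r : ℕ) (q : ℂ) (hr : 0 < r) {ζ : ℂ} (hζ : ζ ∈ nthRootsFinset r (1 : ℂ)) :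
    (1 - ζ * q) * ∑ n ∈ range r, (ζ * q) ^ n = 1 - q ^ r := by
  have h1 : (ζ * q) ^ r = q ^ r := by
    rw [mul_pow, (mem_nthRootsFinset hr 1).1 hζ, one_mul]
  have h := geom_sum_mul (ζ * q) r
  linear_combination -h - h1

open Polynomial in
lemma one_sub_ne (r : ℕ) (q : ℂ) (hr : 0 < r) (hx : q ^ r ≠ 1) {ζ : ℂ}
    (hζ : ζ ∈ nthRootsFinset r (1 : ℂ)) : 1 - ζ * q ≠ 0 := by
  intro h
  have h1 : (ζ * q) ^ r = q ^ r := by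
    rw [mul_pow, (mem_nthRootsFinset hr 1).1 hζ, one_mul]
  have : ζ * q = 1 := by linear_combination -h
  rw [this, one_pow] at h1
  exact hx h1.symm

/-- The basic root-of-unity filter computation for a single shifted index. -/
lemma filter_row (r s : ℕ) (hr : 0 < r) (hs : s < 2 * r) (q : ℂ) :
    ∑ p ∈ range r, q ^ (s + p) * (if r ∣ (s + p) then (r:ℂ) else 0)
      = (r:ℂ) * (if s = 0 then 1 else if s ≤ r then q ^ r else q ^ (2*r)) := by
  have key : ∀ p ∈ range r, ∀ (_ : r ∣ (s + p)),
      (s = 0 ∧ p = 0) ∨ (1 ≤ s ∧ s ≤ r ∧ p = r - s) ∨ (r < s ∧ p = 2*r - s) := by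
    intro p hp hd
    have hpr := mem_range.1 hp
    obtain ⟨k, hk⟩ := hd
    have hk3 : k < 3 := by
      by_contra h
      push_neg at h
      have : 3 * r ≤ r * k := by calc 3 * r = r * 3 := by ring
                                    _ ≤ r * k := Nat.mul_le_mul_left r h
      omega
    interval_cases k <;> omega
  rcases Nat.eq_zero_or_pos s with rfl | hs0
  · rw [if_pos rfl, mul_one]
    rw [Finset.sum_eq_single_of_mem 0 (mem_range.2 hr)]
    · simp
    · intro p hp hp0
      rw [if_neg, mul_zero]
      intro hd
      rcases key p hp hd with h | h | h <;> omega
  · rw [if_neg hs0.ne']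
    by_cases hsr : s ≤ r
    · rw [if_pos hsr]
      rw [Finset.sum_eq_single_of_mem (r - s) (mem_range.2 (by omega))]
      · have h1 : s + (r - s) = r := by omega
        rw [h1, if_pos dvd_rfl]; ring
      · intro p hp hp0
        rw [if_neg, mul_zero]
        intro hd
        rcases key p hp hd with h | h | h <;> omega
    · rw [if_neg hsr]
      rw [Finset.sum_eq_single_of_mem (2*r - s) (mem_range.2 (by omega))]
      · have h1 : s + (2*r - s) = 2*r := by omega
        rw [h1, if_pos ⟨2, by ring⟩]; ring
      · intro p hp hp0
        rw [if_neg, mul_zero]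
        intro hd
        rcases key p hp hd with h | h | h <;> omega

open Polynomial in
lemma E1 (r : ℕ) (hr : 0 < r) (q : ℂ) :
    ∑ ζ ∈ nthRootsFinset r (1 : ℂ), ∑ n ∈ range r, (ζ * q) ^ n = (r : ℂ) := by
  rw [Finset.sum_comm]
  have step : ∀ n ∈ range r, ∑ ζ ∈ nthRootsFinset r (1 : ℂ), (ζ * q) ^ n
      = q ^ (0 + n) * (if r ∣ (0 + n) then (r:ℂ) else 0) := by
    intro n _
    rw [zero_add, ← sum_pow_nthRoots r hr n, Finset.mul_sum]
    exact Finset.sum_congr rfl fun ζ _ => by ring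
  rw [Finset.sum_congr rfl step, filter_row r 0 hr (by omega) q, if_pos rfl, mul_one]

open Polynomial in
lemma E2 (r : ℕ) (hr : 0 < r) (q : ℂ) :
    ∑ ζ ∈ nthRootsFinset r (1 : ℂ), (∑ n ∈ range r, (ζ * q) ^ n) ^ 2
      = (r : ℂ) * (1 + ((r : ℂ) - 1) * q ^ r) := by
  have step : ∀ ζ ∈ nthRootsFinset r (1 : ℂ), (∑ n ∈ range r, (ζ * q) ^ n) ^ 2
      = ∑ n ∈ range r, ∑ m ∈ range r, ζ ^ (n + m) * q ^ (n + m) := by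
    intro ζ _
    rw [sq, Finset.sum_mul_sum]
    exact Finset.sum_congr rfl fun n _ => Finset.sum_congr rfl fun m _ => by
      rw [mul_pow, mul_pow, pow_add, pow_add]; ring
  rw [Finset.sum_congr rfl step, Finset.sum_comm]
  have step2 : ∀ n ∈ range r, ∑ ζ ∈ nthRootsFinset r (1 : ℂ), ∑ m ∈ range r, ζ ^ (n+m) * q ^ (n+m)
      = (r:ℂ) * (if n = 0 then 1 else q ^ r) := by
    intro n hn
    rw [Finset.sum_comm]
    have : ∀ m ∈ range r, ∑ ζ ∈ nthRootsFinset r (1 : ℂ), ζ ^ (n+m) * q ^ (n+m)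
        = q ^ (n + m) * (if r ∣ (n + m) then (r:ℂ) else 0) := by
      intro m _
      rw [← sum_pow_nthRoots r hr (n+m), Finset.mul_sum]
      exact Finset.sum_congr rfl fun ζ _ => by ring
    rw [Finset.sum_congr rfl this, filter_row r n hr (by have := mem_range.1 hn; omega) q]
    rcases Nat.eq_zero_or_pos n with rfl | h
    · simp
    · rw [if_neg h.ne', if_neg h.ne', if_pos (le_of_lt (mem_range.1 hn))]
  rw [Finset.sum_congr rfl step2]
  have : ∀ n ∈ range r, (r:ℂ) * (if n = 0 then 1 else q ^ r)
      = (r:ℂ) * q ^ r + (if n = 0 then (r:ℂ) * (1 - q ^ r) else 0) := by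
    intro n _; split <;> ring
  rw [Finset.sum_congr rfl this, Finset.sum_add_distrib, Finset.sum_const,
    Finset.sum_ite_eq' (range r) 0 (fun _ => (r:ℂ) * (1 - q ^ r)),
    if_pos (mem_range.2 hr), card_range, nsmul_eq_mul]
  ring

open Polynomial in
lemma E3 (r : ℕ) (hr : 0 < r) (q : ℂ) :
    ∑ ζ ∈ nthRootsFinset r (1 : ℂ), (∑ n ∈ range r, (ζ * q) ^ n) ^ 3
      = (r : ℂ) * (1 + (((r:ℂ) - 1) + ((r:ℂ)^2 - 1) - (r:ℂ)*((r:ℂ)-1)/2) * q ^ r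
          + ((r:ℂ)*((r:ℂ)-1)/2 - ((r:ℂ)-1)) * q ^ (2*r)) := by
  have step : ∀ ζ ∈ nthRootsFinset r (1 : ℂ), (∑ n ∈ range r, (ζ * q) ^ n) ^ 3
      = ∑ n ∈ range r, ∑ m ∈ range r, ∑ p ∈ range r, ζ ^ (n + m + p) * q ^ (n + m + p) := by
    intro ζ _
    rw [pow_succ, sq, Finset.sum_mul_sum, Finset.sum_mul]
    refine Finset.sum_congr rfl fun n _ => ?_
    rw [Finset.sum_mul_sum]
    exact Finset.sum_congr rfl fun m _ => Finset.sum_congr rfl fun p _ => by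
      rw [mul_pow, mul_pow, mul_pow, pow_add, pow_add, pow_add, pow_add]; ring
  rw [Finset.sum_congr rfl step, Finset.sum_comm]
  have step2 : ∀ n ∈ range r,
      ∑ ζ ∈ nthRootsFinset r (1 : ℂ), ∑ m ∈ range r, ∑ p ∈ range r, ζ ^ (n+m+p) * q ^ (n+m+p)
      = ∑ m ∈ range r, (r:ℂ) * (if n + m = 0 then 1 else if n + m ≤ r then q ^ r else q ^ (2*r)) := by
    intro n hn
    rw [Finset.sum_comm]
    refine Finset.sum_congr rfl fun m hm => ?_
    rw [Finset.sum_comm]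
    have : ∀ p ∈ range r, ∑ ζ ∈ nthRootsFinset r (1 : ℂ), ζ ^ (n+m+p) * q ^ (n+m+p)
        = q ^ (n + m + p) * (if r ∣ (n + m + p) then (r:ℂ) else 0) := by
      intro p _
      rw [← sum_pow_nthRoots r hr (n+m+p), Finset.mul_sum]
      exact Finset.sum_congr rfl fun ζ _ => by ring
    rw [Finset.sum_congr rfl this,
      filter_row r (n+m) hr (by have := mem_range.1 hn; have := mem_range.1 hm; omega) q]
  rw [Finset.sum_congr rfl step2]
  have row : ∀ n ∈ range r, ∑ m ∈ range r,
      (r:ℂ) * (if n + m = 0 then 1 else if n + m ≤ r then q ^ r else q ^ (2*r))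
      = if n = 0 then (r:ℂ) * (1 + ((r:ℂ)-1) * q ^ r)
        else (r:ℂ) * ((((r:ℂ)-(n:ℂ)+1)) * q ^ r + ((n:ℂ)-1) * q ^ (2*r)) := by
    intro n hn
    have hnr := mem_range.1 hn
    rcases Nat.eq_zero_or_pos n with rfl | hn0
    · rw [if_pos rfl]
      have : ∀ m ∈ range r, (r:ℂ) * (if 0 + m = 0 then 1 else if 0 + m ≤ r then q ^ r else q ^ (2*r))
          = (r:ℂ) * q ^ r + (if m = 0 then (r:ℂ) * (1 - q ^ r) else 0) := by
        intro m hm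
        have hmr := mem_range.1 hm
        rcases Nat.eq_zero_or_pos m with rfl | hm0
        · simp; ring
        · rw [zero_add, if_neg hm0.ne', if_pos (le_of_lt hmr), if_neg hm0.ne', add_zero]
      rw [Finset.sum_congr rfl this, Finset.sum_add_distrib, Finset.sum_const,
        Finset.sum_ite_eq' (range r) 0 (fun _ => (r:ℂ) * (1 - q ^ r)),
        if_pos (mem_range.2 hr), card_range, nsmul_eq_mul]
      ring
    · rw [if_neg hn0.ne']
      have hK : r - n + 1 ≤ r := by omega
      have h1 : ∀ m ∈ Ico 0 (r - n + 1),
          (r:ℂ) * (if n + m = 0 then 1 else if n + m ≤ r then q ^ r else q ^ (2*r))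
          = (r:ℂ) * q ^ r := by
        intro m hm
        have := mem_Ico.1 hm
        rw [if_neg (by omega), if_pos (by omega)]
      have h2 : ∀ m ∈ Ico (r - n + 1) r,
          (r:ℂ) * (if n + m = 0 then 1 else if n + m ≤ r then q ^ r else q ^ (2*r))
          = (r:ℂ) * q ^ (2*r) := by
        intro m hm
        have := mem_Ico.1 hm
        rw [if_neg (by omega), if_neg (by omega)]
      rw [range_eq_Ico, ← Finset.sum_Ico_consecutive _ (Nat.zero_le (r - n + 1)) hK,
        Finset.sum_congr rfl h1, Finset.sum_congr rfl h2, Finset.sum_const, Finset.sum_const,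
        Nat.card_Ico, Nat.card_Ico, nsmul_eq_mul, nsmul_eq_mul]
      have c1 : ((r - n + 1 - 0 : ℕ) : ℂ) = (r:ℂ) - (n:ℂ) + 1 := by
        push_cast [Nat.cast_sub (le_of_lt hnr)]; ring
      have c2 : ((r - (r - n + 1) : ℕ) : ℂ) = (n:ℂ) - 1 := by
        have : r - (r - n + 1) = n - 1 := by omega
        rw [this]; push_cast [Nat.cast_sub hn0]; ring
      rw [c1, c2]; ring
  rw [Finset.sum_congr rfl row]
  have gauss : ∑ n ∈ Ico 1 r, (n:ℂ) = (r:ℂ)*((r:ℂ)-1)/2 := by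
    have h0 : ∑ n ∈ Ico 0 r, (n:ℂ) = ∑ n ∈ Ico 1 r, (n:ℂ) := by
      rw [Finset.sum_eq_sum_Ico_succ_bot hr]
      norm_num
    have h1 := Finset.sum_range_id_mul_two r
    have h2 : ((∑ i ∈ range r, i : ℕ):ℂ) * 2 = ((r * (r-1) : ℕ) : ℂ) := by
      exact_mod_cast congrArg (Nat.cast : ℕ → ℂ) h1
    rw [Nat.cast_mul, Nat.cast_sub (Nat.one_le_iff_ne_zero.2 hr.ne'), Nat.cast_sum] at h2
    rw [← h0, ← range_eq_Ico]
    rw [Nat.cast_one] at h2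
    linear_combination h2 / 2
  rw [range_eq_Ico, Finset.sum_eq_sum_Ico_succ_bot hr, if_pos rfl]
  have h3 : ∀ n ∈ Ico 1 r,
      (if n = 0 then (r:ℂ) * (1 + ((r:ℂ)-1) * q ^ r)
        else (r:ℂ) * ((((r:ℂ)-(n:ℂ)+1)) * q ^ r + ((n:ℂ)-1) * q ^ (2*r)))
      = ((r:ℂ)*((r:ℂ)+1)*q^r - (r:ℂ)*q^(2*r)) + ((r:ℂ)*q^(2*r) - (r:ℂ)*q^r) * (n:ℂ) := by
    intro n hn
    have := mem_Ico.1 hn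
    rw [if_neg (by omega)]
    ring
  rw [Finset.sum_congr rfl h3, Finset.sum_add_distrib, Finset.sum_const, ← Finset.mul_sum,
    gauss, Nat.card_Ico, nsmul_eq_mul]
  have c3 : ((r - 1 : ℕ) : ℂ) = (r:ℂ) - 1 := by
    push_cast [Nat.cast_sub (Nat.one_le_iff_ne_zero.2 hr.ne')]; ring
  rw [c3]
  ring

open Polynomial in
/-- Partial-fraction expansion of a single multiple-cover term over the `r`-th roots of unity. -/
lemma keyD (r : ℕ) (hr : 0 < r) (q : ℂ) (hx : q ^ r ≠ 1) :
    ∑ ζ ∈ nthRootsFinset r (1 : ℂ),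
      (((r:ℂ) - ((r:ℂ))^(-3:ℤ)) / (1 - ζ * q) + (3 * ((r:ℂ))^(-3:ℤ)) / (1 - ζ * q) ^ 2
        - (2 * ((r:ℂ))^(-3:ℤ)) / (1 - ζ * q) ^ 3)
      = mcB r (q ^ r) := by
  have hr0 : (r:ℂ) ≠ 0 := Nat.cast_ne_zero.2 hr.ne'
  have hx0 : 1 - q ^ r ≠ 0 := sub_ne_zero.2 fun h => hx h.symm
  have alg : ∀ (u S x A B C : ℂ), u ≠ 0 → S ≠ 0 → u * S = x →
      A/u + B/u^2 - C/u^3 = A*(S/x) + B*(S^2/x^2) - C*(S^3/x^3) := by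
    intro u S x A B C hu hS hx
    subst hx
    field_simp
  have step : ∀ ζ ∈ nthRootsFinset r (1 : ℂ),
      (((r:ℂ) - ((r:ℂ))^(-3:ℤ)) / (1 - ζ * q) + (3 * ((r:ℂ))^(-3:ℤ)) / (1 - ζ * q) ^ 2
        - (2 * ((r:ℂ))^(-3:ℤ)) / (1 - ζ * q) ^ 3)
      = ((r:ℂ) - ((r:ℂ))^(-3:ℤ)) * ((∑ n ∈ range r, (ζ*q)^n) / (1 - q ^ r))
        + (3 * ((r:ℂ))^(-3:ℤ)) * ((∑ n ∈ range r, (ζ*q)^n) ^ 2 / (1 - q ^ r) ^ 2)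
        - (2 * ((r:ℂ))^(-3:ℤ)) * ((∑ n ∈ range r, (ζ*q)^n) ^ 3 / (1 - q ^ r) ^ 3) := by
    intro ζ hζ
    have hu : 1 - ζ * q ≠ 0 := one_sub_ne r q hr hx hζ
    have hgeom := geom_fact r q hr hζ
    have hS : (∑ n ∈ range r, (ζ*q)^n) ≠ 0 := by
      intro h; rw [h, mul_zero] at hgeom; exact hx0 hgeom.symm
    have := alg (1 - ζ * q) (∑ n ∈ range r, (ζ*q)^n) (1 - q ^ r)
      ((r:ℂ) - ((r:ℂ))^(-3:ℤ)) (3 * ((r:ℂ))^(-3:ℤ)) (2 * ((r:ℂ))^(-3:ℤ)) hu hS hgeom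
    rw [this]
  rw [Finset.sum_congr rfl step]
  rw [Finset.sum_sub_distrib, Finset.sum_add_distrib, ← Finset.mul_sum, ← Finset.mul_sum,
    ← Finset.mul_sum, ← Finset.sum_div, ← Finset.sum_div, ← Finset.sum_div,
    E1 r hr q, E2 r hr q, E3 r hr q]
  have hz : ((r:ℂ))^(-3:ℤ) = 1/((r:ℂ)^3) := by
    rw [show (-3:ℤ) = -((3:ℕ):ℤ) by norm_num, zpow_neg, zpow_natCast, one_div]
  rw [hz, mcB, pow_mul']
  generalize q ^ r = x at hx0 ⊢
  field_simp [hx0, hr0]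
  ring

open Polynomial in
lemma sum_nthRoots_eq_divisors (r : ℕ) (hr : 0 < r) (f : ℂ → ℂ) :
    ∑ ζ ∈ nthRootsFinset r (1 : ℂ), f ζ = ∑ d ∈ r.divisors, ∑ ζ ∈ primitiveRoots d ℂ, f ζ := by
  rw [IsPrimitiveRoot.nthRoots_one_eq_biUnion_primitiveRoots (R := ℂ) (n := r)]
  exact Finset.sum_biUnion fun i _ j _ hij => IsPrimitiveRoot.disjoint hij

lemma divisor_swap (M : ℕ) (hM : M ≠ 0) (F : ℕ → ℕ → ℂ) :
    ∑ r ∈ M.divisors, ∑ d ∈ r.divisors, F r d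
      = ∑ d ∈ M.divisors, ∑ e ∈ (M/d).divisors, F (d*e) d := by
  rw [Finset.sum_sigma', Finset.sum_sigma']
  refine Finset.sum_nbij' (fun p => ⟨p.2, p.1 / p.2⟩) (fun p => ⟨p.1 * p.2, p.1⟩)
    ?_ ?_ ?_ ?_ ?_
  · rintro ⟨r, d⟩ hp
    simp only [Finset.mem_sigma, Nat.mem_divisors] at hp ⊢
    obtain ⟨⟨hrM, -⟩, ⟨hdr, hr0⟩⟩ := hp
    have hdM : d ∣ M := hdr.trans hrM
    have hd0 : d ≠ 0 := by rintro rfl; exact hr0 (zero_dvd_iff.1 hdr)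
    refine ⟨⟨hdM, hM⟩, ?_, ?_⟩
    · rw [Nat.dvd_div_iff_mul_dvd hdM, Nat.mul_div_cancel' hdr]
      exact hrM
    · have h1 : d ≤ M := Nat.le_of_dvd (Nat.pos_of_ne_zero hM) hdM
      have := Nat.div_pos h1 (Nat.pos_of_ne_zero hd0)
      omega
  · rintro ⟨d, e⟩ hp
    simp only [Finset.mem_sigma, Nat.mem_divisors] at hp ⊢
    obtain ⟨⟨hdM, -⟩, ⟨heMd, hMd0⟩⟩ := hp
    have hde : d * e ∣ M := (Nat.dvd_div_iff_mul_dvd hdM).1 heMd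
    exact ⟨⟨hde, hM⟩, ⟨Dvd.intro e rfl, fun h => hM (zero_dvd_iff.1 (h ▸ hde))⟩⟩
  · rintro ⟨r, d⟩ hp
    simp only [Finset.mem_sigma, Nat.mem_divisors] at hp
    obtain ⟨⟨hrM, -⟩, ⟨hdr, hr0⟩⟩ := hp
    simp only [Sigma.mk.inj_iff]
    exact ⟨Nat.mul_div_cancel' hdr, heq_of_eq rfl⟩
  · rintro ⟨d, e⟩ hp
    simp only [Finset.mem_sigma, Nat.mem_divisors] at hp
    obtain ⟨⟨hdM, -⟩, ⟨heMd, hMd0⟩⟩ := hp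
    have hd0 : d ≠ 0 := by
      rintro rfl; rw [Nat.div_zero] at hMd0; exact hMd0 rfl
    simp only [Sigma.mk.inj_iff]
    exact ⟨trivial, heq_of_eq (Nat.mul_div_cancel_left e (Nat.pos_of_ne_zero hd0))⟩
  · rintro ⟨r, d⟩ hp
    simp only [Finset.mem_sigma, Nat.mem_divisors] at hp
    obtain ⟨⟨hrM, -⟩, ⟨hdr, hr0⟩⟩ := hp
    simp only
    rw [Nat.mul_div_cancel' hdr]

lemma S1 (d n : ℕ) (hd : d ≠ 0) (hn : n ≠ 0) (g : ℕ → ℂ) :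
    ∑ e ∈ n.divisors, g (n / e) * ((d * e : ℕ) : ℂ)
      = ((d * n : ℕ) : ℂ) * GVsum g (-1) n := by
  rw [GVsum, ← Nat.sum_div_divisors n (fun k => (k:ℂ)^(-1:ℤ) * g k), Finset.mul_sum]
  refine Finset.sum_congr rfl fun e he => ?_
  obtain ⟨hen, -⟩ := Nat.mem_divisors.1 he
  have he0 : e ≠ 0 := by rintro rfl; exact hn (zero_dvd_iff.1 hen)
  have hcast : ((n / e : ℕ) : ℂ) = (n : ℂ) / (e : ℂ) :=
    Nat.cast_div hen (Nat.cast_ne_zero.2 he0)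
  rw [zpow_neg_one, hcast]
  push_cast
  have hc1 : (e : ℂ) ≠ 0 := Nat.cast_ne_zero.2 he0
  have hc2 : (n : ℂ) ≠ 0 := Nat.cast_ne_zero.2 hn
  field_simp

lemma S3 (d n : ℕ) (hd : d ≠ 0) (hn : n ≠ 0) (g : ℕ → ℂ) :
    ∑ e ∈ n.divisors, g (n / e) * ((d * e : ℕ) : ℂ) ^ (-3:ℤ)
      = ((d * n : ℕ) : ℂ) ^ (-3:ℤ) * GVsum g 3 n := by
  rw [GVsum, ← Nat.sum_div_divisors n (fun k => (k:ℂ)^(3:ℤ) * g k), Finset.mul_sum]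
  refine Finset.sum_congr rfl fun e he => ?_
  obtain ⟨hen, -⟩ := Nat.mem_divisors.1 he
  have he0 : e ≠ 0 := by rintro rfl; exact hn (zero_dvd_iff.1 hen)
  have hcast : ((n / e : ℕ) : ℂ) = (n : ℂ) / (e : ℂ) :=
    Nat.cast_div hen (Nat.cast_ne_zero.2 he0)
  have hz : ∀ x : ℂ, x ^ (-3:ℤ) = 1 / x ^ 3 := by
    intro x
    rw [show (-3:ℤ) = -((3:ℕ):ℤ) by norm_num, zpow_neg, zpow_natCast, one_div]
  have hz3 : ∀ x : ℂ, x ^ (3:ℤ) = x ^ 3 := fun x => by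
    rw [show (3:ℤ) = ((3:ℕ):ℤ) by norm_num, zpow_natCast]
  rw [hz, hz, hz3, hcast]
  push_cast
  have hc1 : (e : ℂ) ≠ 0 := Nat.cast_ne_zero.2 he0
  have hc2 : (n : ℂ) ≠ 0 := Nat.cast_ne_zero.2 hn
  have hc3 : (d : ℂ) ≠ 0 := Nat.cast_ne_zero.2 hd
  field_simp

lemma final_inner (M d : ℕ) (hM : M ≠ 0) (hdM : d ∣ M) (g : ℕ → ℂ) (u : ℂ) :
    ∑ e ∈ (M/d).divisors, g (M / (d*e)) *
      ((((d*e : ℕ):ℂ) - ((d*e : ℕ):ℂ)^(-3:ℤ)) / u + (3 * ((d*e : ℕ):ℂ)^(-3:ℤ)) / u^2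
        - (2 * ((d*e : ℕ):ℂ)^(-3:ℤ)) / u^3)
    = ((M:ℂ) * GVsum g (-1) (M/d) - (M:ℂ)^(-3:ℤ) * GVsum g 3 (M/d)) / u
      + (3 * (M:ℂ)^(-3:ℤ) * GVsum g 3 (M/d)) / u^2
      - (2 * (M:ℂ)^(-3:ℤ) * GVsum g 3 (M/d)) / u^3 := by
  obtain ⟨n, rfl⟩ := hdM
  have hd0 : d ≠ 0 := by rintro rfl; simp at hM
  have hn0 : n ≠ 0 := by rintro rfl; simp at hM
  have hMd : d * n / d = n := Nat.mul_div_cancel_left n (Nat.pos_of_ne_zero hd0)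
  have hdiv : ∀ e, d * n / (d * e) = n / e := fun e =>
    Nat.mul_div_mul_left n e (Nat.pos_of_ne_zero hd0)
  rw [hMd]
  have expand : ∀ e ∈ n.divisors, g (d * n / (d*e)) *
      ((((d*e : ℕ):ℂ) - ((d*e : ℕ):ℂ)^(-3:ℤ)) / u + (3 * ((d*e : ℕ):ℂ)^(-3:ℤ)) / u^2
        - (2 * ((d*e : ℕ):ℂ)^(-3:ℤ)) / u^3)
      = (g (n / e) * ((d*e : ℕ):ℂ)) * (1/u)
        + (g (n / e) * ((d*e : ℕ):ℂ)^(-3:ℤ)) * (-(1/u) + 3/u^2 - 2/u^3) := by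
    intro e _
    rw [hdiv e]
    ring
  rw [Finset.sum_congr rfl expand, Finset.sum_add_distrib, ← Finset.sum_mul, ← Finset.sum_mul,
    S1 d n hd0 hn0 g, S3 d n hd0 hn0 g]
  ring

/-- Partial fraction expansion of the `b`-part:
`Σ_{r ∣ M} g(M/r)·b(r, q^r)
  = Σ_{r ∣ M} Σ_ζ [ (M·G₋₁(M/r) − M⁻³·G₃(M/r))/(1 − ζq)
      + 3M⁻³·G₃(M/r)/(1 − ζq)² − 2M⁻³·G₃(M/r)/(1 − ζq)³ ]`,
the inner sum running over the primitive `r`-th roots of unity `ζ` in `ℂ`. -/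
theorem stmt_5 (M : ℕ) (hM : 1 ≤ M) (g : ℕ → ℂ) (q : ℂ) (hq : q ^ M ≠ 1) :
    ∑ r ∈ M.divisors, g (M / r) * mcB r (q ^ r) =
      ∑ r ∈ M.divisors, ∑ ζ ∈ primitiveRoots r ℂ,
        (((M : ℂ) * GVsum g (-1) (M / r) - (M : ℂ) ^ (-3 : ℤ) * GVsum g 3 (M / r)) /
            (1 - ζ * q) +
          (3 * (M : ℂ) ^ (-3 : ℤ) * GVsum g 3 (M / r)) / (1 - ζ * q) ^ 2 -
          (2 * (M : ℂ) ^ (-3 : ℤ) * GVsum g 3 (M / r)) / (1 - ζ * q) ^ 3) := by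
  have hM0 : M ≠ 0 := by omega
  have hqr : ∀ r, r ∣ M → q ^ r ≠ 1 := by
    intro r hr h
    obtain ⟨k, hk⟩ := hr
    exact hq (by rw [hk, pow_mul, h, one_pow])
  have h1 : ∀ r ∈ M.divisors, g (M / r) * mcB r (q ^ r)
      = ∑ d ∈ r.divisors, ∑ ζ ∈ primitiveRoots d ℂ, g (M / r) *
          (((r:ℂ) - ((r:ℂ))^(-3:ℤ)) / (1 - ζ * q) + (3 * ((r:ℂ))^(-3:ℤ)) / (1 - ζ * q)^2
            - (2 * ((r:ℂ))^(-3:ℤ)) / (1 - ζ * q)^3) := by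
    intro r hr
    have hrpos : 0 < r := Nat.pos_of_mem_divisors hr
    obtain ⟨hrM, -⟩ := Nat.mem_divisors.1 hr
    rw [← keyD r hrpos q (hqr r hrM), sum_nthRoots_eq_divisors r hrpos, Finset.mul_sum]
    exact Finset.sum_congr rfl fun d _ => Finset.mul_sum _ _ _
  rw [Finset.sum_congr rfl h1,
    divisor_swap M hM0 (fun r d => ∑ ζ ∈ primitiveRoots d ℂ, g (M / r) *
      (((r:ℂ) - ((r:ℂ))^(-3:ℤ)) / (1 - ζ * q) + (3 * ((r:ℂ))^(-3:ℤ)) / (1 - ζ * q)^2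
        - (2 * ((r:ℂ))^(-3:ℤ)) / (1 - ζ * q)^3))]
  refine Finset.sum_congr rfl fun d hd => ?_
  obtain ⟨hdM, -⟩ := Nat.mem_divisors.1 hd
  rw [Finset.sum_comm]
  refine Finset.sum_congr rfl fun ζ _ => ?_
  have := final_inner M d hM0 hdM g (1 - ζ * q)
  rw [← this]
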